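/- Let α,β,γ,δ,k ∈ ℝ with αδ−βγ ≠ 0, let n ≥ 1 be a natural number, and define ψ(t) = (αt+β)/(γt+δ) for real t with γt+δ ≠ 0. Suppose that for every t ∈ ℝ with γt+δ ≠ 0 one has (k·(γ·ψ(t)+δ)ⁿ)·(k·(γt+δ)ⁿ) = 1. Then γ(α+δ) = 0 and k²·(γβ+δ²)ⁿ = 1. -/

import Mathlib

/-- Case (ii) in the derivation of Theorem 8 (fund3): the condition on the
`s`-coefficient `k(γt+δ)^n` arising from `φ∘φ = id` forces `γ(α+δ) = 0`
and `k²(γβ+δ²)^n = 1`. -/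
theorem stmt_6 (α β γ δ k : ℝ) (hm : α * δ - β * γ ≠ 0)
    (n : ℕ) (hn : 1 ≤ n)
    (ψ : ℝ → ℝ) (hψ : ∀ t : ℝ, γ * t + δ ≠ 0 → ψ t = (α * t + β) / (γ * t + δ))
    (h : ∀ t : ℝ, γ * t + δ ≠ 0 →
      (k * (γ * ψ t + δ) ^ n) * (k * (γ * t + δ) ^ n) = 1) :
    γ * (α + δ) = 0 ∧ k ^ 2 * (γ * β + δ ^ 2) ^ n = 1 := by
  have hn0 : n ≠ 0 := by omega
  set A := γ * (α + δ) with hA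
  set B := γ * β + δ ^ 2 with hB
  have key : ∀ t : ℝ, γ * t + δ ≠ 0 → k ^ 2 * (A * t + B) ^ n = 1 := by
    intro t ht
    have h1 := h t ht
    rw [hψ t ht] at h1
    have h2 : γ * ((α * t + β) / (γ * t + δ)) + δ = (A * t + B) / (γ * t + δ) := by
      field_simp
      ring
    rw [h2] at h1
    have h3 : ((A * t + B) / (γ * t + δ)) ^ n * (γ * t + δ) ^ n = (A * t + B) ^ n := by
      rw [← mul_pow, div_mul_cancel₀ _ ht]
    calc k ^ 2 * (A * t + B) ^ n
        = k * ((A * t + B) / (γ * t + δ)) ^ n * (k * (γ * t + δ) ^ n) := by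
          rw [show k * ((A * t + B) / (γ * t + δ)) ^ n * (k * (γ * t + δ) ^ n)
            = k ^ 2 * (((A * t + B) / (γ * t + δ)) ^ n * (γ * t + δ) ^ n) by ring, h3]
      _ = 1 := h1
  by_cases hA0 : A = 0
  · refine ⟨hA0, ?_⟩
    obtain ⟨t, ht⟩ : ∃ t : ℝ, γ * t + δ ≠ 0 := by
      by_cases hγ : γ = 0
      · have hδ : δ ≠ 0 := by
          intro h0
          apply hm
          rw [hγ, h0]; ring
        exact ⟨0, by simp [hγ, hδ]⟩
      · refine ⟨(1 - δ) / γ, ?_⟩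
        rw [mul_div_cancel₀ _ hγ]
        norm_num
    have := key t ht
    rw [hA0] at this
    simpa using this
  · exfalso
    have hγ : γ ≠ 0 := by
      intro h0
      apply hA0
      rw [hA, h0]; ring
    set g : ℝ → ℝ := fun c => γ * ((c - B) / A) + δ with hg
    have key2 : ∀ c : ℝ, g c ≠ 0 → k ^ 2 * c ^ n = 1 := by
      intro c hc
      have := key _ hc
      rwa [show A * ((c - B) / A) + B = c by field_simp; ring] at this
    have ginj : ∀ c₁ c₂ : ℝ, g c₁ = 0 → g c₂ = 0 → c₁ = c₂ := by
      intro c₁ c₂ e1 e2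
      have e : g c₁ = g c₂ := by rw [e1, e2]
      simp only [hg] at e
      field_simp at e
      have e' := mul_left_cancel₀ hγ (show γ * (c₁ - B) = γ * (c₂ - B) by linarith)
      linarith
    have contra : ∀ c₁ c₂ : ℝ, 0 < c₁ → c₁ < c₂ →
        k ^ 2 * c₁ ^ n = 1 → k ^ 2 * c₂ ^ n = 1 → False := by
      intro c₁ c₂ hc1 hlt e1 e2
      have hk : k ≠ 0 := by
        intro h0
        rw [h0] at e1
        norm_num at e1
      have hlt' : c₁ ^ n < c₂ ^ n := pow_lt_pow_left₀ hlt hc1.le hn0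
      have hk2 : (0:ℝ) < k ^ 2 := by positivity
      nlinarith
    by_cases h1 : g 1 = 0
    · have h2 : g 2 ≠ 0 := fun e => absurd (ginj 1 2 h1 e) (by norm_num)
      have h3 : g 3 ≠ 0 := fun e => absurd (ginj 1 3 h1 e) (by norm_num)
      exact contra 2 3 (by norm_num) (by norm_num) (key2 2 h2) (key2 3 h3)
    · by_cases h2 : g 2 = 0
      · have h3 : g 3 ≠ 0 := fun e => absurd (ginj 2 3 h2 e) (by norm_num)
        exact contra 1 3 (by norm_num) (by norm_num) (key2 1 h1) (key2 3 h3)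
      · exact contra 1 2 (by norm_num) (by norm_num) (key2 1 h1) (key2 2 h2)
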